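/- Let A ∈ ℝ^{N×r} with rank(A) = r and orthonormal column-space basis U_A, let B ∈ ℝ^{N×n}, let B^⊥ = B − U_A U_Aᵀ B, and let R² = ‖B^⊥‖_F². Let p ∈ [0,1]^N be a probability distribution such that for some β ∈ (0,1], pᵢ ≥ β ℓᵢ(A)/r for all i ∈ [N], where ℓᵢ(A) = ‖U_A(i,:)‖₂² are the row leverage scores, and let S ∈ ℝ^{s×N} ~ RandSample(s, p). Then E[‖U_Aᵀ Sᵀ S B^⊥‖_F²] ≤ (r/(β s)) R². -/

import Mathlib

open Matrix MeasureTheory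

/-- Squared Frobenius norm of a real matrix. -/
noncomputable def frobSq {m n : Type*} [Fintype m] [Fintype n] (M : Matrix m n ℝ) : ℝ :=
  ∑ i, ∑ j, (M i j) ^ 2

/-- Square of the smallest singular value of a matrix, as the infimum of
squared norms `‖M x‖₂²` over unit vectors `x`. -/
noncomputable def sigmaMinSq {m n : Type*} [Fintype m] [Fintype n] (M : Matrix m n ℝ) : ℝ :=
  sInf {c : ℝ | ∃ x : n → ℝ, ∑ i, (x i) ^ 2 = 1 ∧ c = ∑ j, (M.mulVec x j) ^ 2}

/-- Square of the largest singular value of a matrix. -/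
noncomputable def sigmaMaxSq {m n : Type*} [Fintype m] [Fintype n] (M : Matrix m n ℝ) : ℝ :=
  sSup {c : ℝ | ∃ x : n → ℝ, ∑ i, (x i) ^ 2 = 1 ∧ c = ∑ j, (M.mulVec x j) ^ 2}

/-- The weighted row-sampling ("RandSample") matrix determined by the sampled
indices `ξ : Fin s → Fin N` and the sampling probabilities `p`:
`S j i = 1/√(s pᵢ)` if `ξ j = i` and `0` otherwise. -/
noncomputable def randSampleMatrix {N : ℕ} (s : ℕ) (p : Fin N → ℝ) (ξ : Fin s → Fin N) :
    Matrix (Fin s) (Fin N) ℝ :=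
  fun j i => if ξ j = i then 1 / Real.sqrt (s * p i) else 0

/-- The measure on `Fin N` in which index `i` has probability `p i`. -/
noncomputable def sampleMeasure {N : ℕ} (p : Fin N → ℝ) : Measure (Fin N) :=
  ∑ i, ENNReal.ofReal (p i) • Measure.dirac i

/-- The law of `s` i.i.d. indices, each drawn from the distribution `p` on `Fin N`. -/
noncomputable def sampleMeasurePi {N : ℕ} (s : ℕ) (p : Fin N → ℝ) :
    Measure (Fin s → Fin N) :=
  Measure.pi fun _ => sampleMeasure p


lemma sampleMeasure_singleton {N : ℕ} (p : Fin N → ℝ) (i : Fin N) :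
    sampleMeasure p {i} = ENNReal.ofReal (p i) := by
  simp [sampleMeasure, Measure.finset_sum_apply, Measure.smul_apply,
    Measure.dirac_apply, Set.indicator_apply]

lemma sampleMeasure_prob {N : ℕ} (p : Fin N → ℝ) (hp0 : ∀ i, 0 ≤ p i)
    (hp1 : ∑ i, p i = 1) : IsProbabilityMeasure (sampleMeasure p) := by
  constructor
  have : sampleMeasure p Set.univ = ∑ i, ENNReal.ofReal (p i) := by
    simp [sampleMeasure, Measure.finset_sum_apply, Measure.smul_apply]
  rw [this, ← ENNReal.ofReal_sum_of_nonneg (fun i _ => hp0 i), hp1, ENNReal.ofReal_one]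

lemma integral_sampleMeasurePi {N s : ℕ} (p : Fin N → ℝ) (hp0 : ∀ i, 0 ≤ p i)
    (hp1 : ∑ i, p i = 1) (f : (Fin s → Fin N) → ℝ) :
    ∫ ξ, f ξ ∂(sampleMeasurePi s p) = ∑ ξ : Fin s → Fin N, (∏ j, p (ξ j)) * f ξ := by
  haveI := sampleMeasure_prob p hp0 hp1
  haveI : IsProbabilityMeasure (sampleMeasurePi s p) := by
    unfold sampleMeasurePi; infer_instance
  rw [integral_fintype .of_finite]
  refine Finset.sum_congr rfl fun ξ _ => ?_
  have h1 : ({ξ} : Set (Fin s → Fin N)) = Set.pi Set.univ (fun j => {ξ j}) := by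
    ext η; simp [Set.mem_pi, funext_iff, eq_comm]
  rw [h1, sampleMeasurePi, measureReal_def, Measure.pi_pi]
  simp only [sampleMeasure_singleton]
  rw [ENNReal.toReal_prod]
  simp [ENNReal.toReal_ofReal (hp0 _), smul_eq_mul]

lemma marg {N s : ℕ} (p : Fin N → ℝ) (hp1 : ∑ i, p i = 1) (φ ψ : Fin N → ℝ)
    (j j' : Fin s) :
    ∑ ξ : Fin s → Fin N, (∏ t, p (ξ t)) * (φ (ξ j) * ψ (ξ j')) =
      if j = j' then ∑ i, p i * (φ i * ψ i)
      else (∑ i, p i * φ i) * (∑ i, p i * ψ i) := by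
  by_cases hjj : j = j'
  · subst hjj
    simp only [if_pos rfl]
    set g : Fin s → Fin N → ℝ := fun t i => p i * (if t = j then φ i * ψ i else 1) with hg
    have key : ∀ ξ : Fin s → Fin N, (∏ t, p (ξ t)) * (φ (ξ j) * ψ (ξ j)) = ∏ t, g t (ξ t) := by
      intro ξ
      simp only [hg]
      rw [Finset.prod_mul_distrib]
      congr 1
      simp
    rw [Finset.sum_congr rfl fun ξ _ => key ξ, ← Fintype.prod_sum g]
    have hgt : ∀ t : Fin s, (∑ i, g t i) = if t = j then ∑ i, p i * (φ i * ψ i) else 1 := by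
      intro t
      by_cases h : t = j <;> simp [hg, h, hp1]
    rw [Finset.prod_congr rfl fun t _ => hgt t]
    simp
  · simp only [if_neg hjj]
    set g : Fin s → Fin N → ℝ :=
      fun t i => p i * (if t = j then φ i else 1) * (if t = j' then ψ i else 1) with hg
    have key : ∀ ξ : Fin s → Fin N,
        (∏ t, p (ξ t)) * (φ (ξ j) * ψ (ξ j')) = ∏ t, g t (ξ t) := by
      intro ξ
      simp only [hg]
      rw [Finset.prod_mul_distrib, Finset.prod_mul_distrib]
      simp [mul_assoc]
    rw [Finset.sum_congr rfl fun ξ _ => key ξ, ← Fintype.prod_sum g]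
    have hgt : ∀ t : Fin s, (∑ i, g t i) =
        (if t = j then ∑ i, p i * φ i else 1) * (if t = j' then ∑ i, p i * ψ i else 1) := by
      intro t
      by_cases h : t = j
      · subst h
        rw [if_pos rfl, if_neg hjj]
        simp [hg, hjj]
      · have h2 : ¬ j' = j := fun hh => hjj hh.symm
        by_cases h' : t = j' <;> simp [hg, h, h', hp1, h2]
    rw [Finset.prod_congr rfl fun t _ => hgt t, Finset.prod_mul_distrib]
    simp


/-- expectation bound toward structural condition SC2.
With leverage score sampling (`pᵢ ≥ β ℓᵢ(A)/r`),
`E[‖U_Aᵀ Sᵀ S B^⊥‖_F²] ≤ (r/(β s)) R²` where `R² = ‖B^⊥‖_F²`. -/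
theorem sc2_expectation_bound {N r n s : ℕ} (hs : 0 < s)
    (A : Matrix (Fin N) (Fin r) ℝ) (hA : A.rank = r)
    (U : Matrix (Fin N) (Fin r) ℝ) (hU : Uᵀ * U = 1)
    (hrange : LinearMap.range A.mulVecLin = LinearMap.range U.mulVecLin)
    (B : Matrix (Fin N) (Fin n) ℝ)
    (Bperp : Matrix (Fin N) (Fin n) ℝ) (hBperp : Bperp = B - U * (Uᵀ * B))
    (Rsq : ℝ) (hRsq : Rsq = frobSq Bperp)
    (p : Fin N → ℝ) (hp0 : ∀ i, 0 ≤ p i) (hp1 : ∑ i, p i = 1)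
    (β : ℝ) (hβ : β ∈ Set.Ioc (0 : ℝ) 1)
    (hlev : ∀ i, β * (∑ j, (U i j) ^ 2) / r ≤ p i) :
    ∫ ξ, frobSq (Uᵀ * (randSampleMatrix s p ξ)ᵀ * (randSampleMatrix s p ξ * Bperp))
        ∂(sampleMeasurePi s p)
      ≤ (r / (β * s)) * Rsq := by
  rw [integral_sampleMeasurePi p hp0 hp1]
  obtain ⟨hβ0, hβ1⟩ := hβ
  set w : Fin N → ℝ := fun i => ((s : ℝ) * p i)⁻¹ with hw
  set h : Fin r → Fin n → Fin N → ℝ := fun a b i => w i * (U i a * Bperp i b) with hh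
  -- zero rows of U where p vanishes
  have hU0 : ∀ i, p i = 0 → ∀ a : Fin r, U i a = 0 := by
    intro i hpi a
    have hl := hlev i
    rw [hpi] at hl
    have hr : 0 < r := a.pos
    have hsum : (∑ j, (U i j) ^ 2) ≤ 0 := by
      by_contra hpos
      push_neg at hpos
      have : 0 < β * (∑ j, (U i j) ^ 2) / r :=
        div_pos (mul_pos hβ0 hpos) (by exact_mod_cast hr)
      linarith
    have hsum0 : ∑ j, (U i j) ^ 2 = 0 :=
      le_antisymm hsum (Finset.sum_nonneg fun _ _ => sq_nonneg _)
    have := (Finset.sum_eq_zero_iff_of_nonneg fun j _ => sq_nonneg (U i j)).mp hsum0 a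
        (Finset.mem_univ a)
    exact pow_eq_zero_iff two_ne_zero |>.mp this
  -- U^T Bperp = 0
  have hUB : Uᵀ * Bperp = 0 := by
    rw [hBperp, Matrix.mul_sub, ← Matrix.mul_assoc, hU, Matrix.one_mul, sub_self]
  -- mean zero
  have hmean : ∀ (a : Fin r) (b : Fin n), ∑ i, p i * h a b i = 0 := by
    intro a b
    have step : ∀ i, p i * h a b i = (s : ℝ)⁻¹ * (U i a * Bperp i b) := by
      intro i
      by_cases hpi : p i = 0
      · simp [hh, hpi, hU0 i hpi a]
      · simp only [hh, hw]
        rw [mul_inv]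
        field_simp
    rw [Finset.sum_congr rfl fun i _ => step i, ← Finset.mul_sum]
    have h0 : (Uᵀ * Bperp) a b = 0 := by rw [hUB]; rfl
    rw [Matrix.mul_apply] at h0
    simp only [Matrix.transpose_apply] at h0
    rw [h0, mul_zero]
  -- entry formula
  have hentry : ∀ (ξ : Fin s → Fin N) (a : Fin r) (b : Fin n),
      (Uᵀ * (randSampleMatrix s p ξ)ᵀ * (randSampleMatrix s p ξ * Bperp)) a b =
        ∑ j, h a b (ξ j) := by
    intro ξ a b
    rw [Matrix.mul_apply]
    refine Finset.sum_congr rfl fun j _ => ?_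
    have e1 : (Uᵀ * (randSampleMatrix s p ξ)ᵀ) a j =
        U (ξ j) a * (1 / Real.sqrt ((s : ℝ) * p (ξ j))) := by
      rw [Matrix.mul_apply]
      have e0 : ∀ i, Uᵀ a i * (randSampleMatrix s p ξ)ᵀ i j =
          if ξ j = i then U i a * (1 / Real.sqrt ((s:ℝ) * p i)) else 0 := by
        intro i
        simp only [Matrix.transpose_apply, randSampleMatrix]
        by_cases hij : ξ j = i <;> simp [hij]
      rw [Finset.sum_congr rfl fun i _ => e0 i, Finset.sum_ite_eq]
      simp
    have e2 : (randSampleMatrix s p ξ * Bperp) j b =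
        (1 / Real.sqrt ((s : ℝ) * p (ξ j))) * Bperp (ξ j) b := by
      rw [Matrix.mul_apply]
      have e0 : ∀ i, randSampleMatrix s p ξ j i * Bperp i b =
          if ξ j = i then (1 / Real.sqrt ((s:ℝ) * p i)) * Bperp i b else 0 := by
        intro i
        simp only [randSampleMatrix]
        by_cases hij : ξ j = i <;> simp [hij]
      rw [Finset.sum_congr rfl fun i _ => e0 i, Finset.sum_ite_eq]
      simp
    rw [e1, e2]
    have hsq : (1 / Real.sqrt ((s : ℝ) * p (ξ j))) * (1 / Real.sqrt ((s : ℝ) * p (ξ j))) =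
        w (ξ j) := by
      rw [div_mul_div_comm, one_mul, Real.mul_self_sqrt
        (mul_nonneg (Nat.cast_nonneg s) (hp0 _)), one_div, hw]
    calc U (ξ j) a * (1 / Real.sqrt ((s:ℝ) * p (ξ j))) *
          ((1 / Real.sqrt ((s:ℝ) * p (ξ j))) * Bperp (ξ j) b)
        = ((1 / Real.sqrt ((s:ℝ) * p (ξ j))) * (1 / Real.sqrt ((s:ℝ) * p (ξ j)))) *
            (U (ξ j) a * Bperp (ξ j) b) := by ring
      _ = h a b (ξ j) := by rw [hsq]
  -- frobSq expansion
  have hf : ∀ ξ : Fin s → Fin N,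
      frobSq (Uᵀ * (randSampleMatrix s p ξ)ᵀ * (randSampleMatrix s p ξ * Bperp)) =
        ∑ a, ∑ b, ∑ j, ∑ j', h a b (ξ j) * h a b (ξ j') := by
    intro ξ
    unfold frobSq
    refine Finset.sum_congr rfl fun a _ => Finset.sum_congr rfl fun b _ => ?_
    rw [hentry ξ a b, sq, Finset.sum_mul_sum]
  -- per-row quantities
  set L : Fin N → ℝ := fun i => ∑ a, (U i a) ^ 2 with hL
  set R : Fin N → ℝ := fun i => ∑ b, (Bperp i b) ^ 2 with hR
  -- termwise bound for the diagonal
  have hkey : ∀ i, (p i * w i ^ 2) * (L i * R i) ≤ ((r : ℝ) / (β * (s : ℝ) ^ 2)) * R i := by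
    intro i
    have hRnn : 0 ≤ R i := Finset.sum_nonneg fun _ _ => sq_nonneg _
    have hLnn : 0 ≤ L i := Finset.sum_nonneg fun _ _ => sq_nonneg _
    have hrhs : 0 ≤ (r : ℝ) / (β * (s : ℝ) ^ 2) := by positivity
    rw [show (p i * w i ^ 2) * (L i * R i) = (p i * w i ^ 2 * L i) * R i by ring]
    refine mul_le_mul_of_nonneg_right ?_ hRnn
    by_cases hpi : p i = 0
    · simp [hw, hpi, hrhs]
    · have hppos : 0 < p i := lt_of_le_of_ne (hp0 i) (Ne.symm hpi)
      rcases Nat.eq_zero_or_pos r with hr | hr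
      · subst hr
        simp [hL, Finset.univ_eq_empty]
      · have hrpos : (0 : ℝ) < r := by exact_mod_cast hr
        have hl := hlev i
        have hβL : β * L i ≤ p i * r := by
          rw [div_le_iff₀ hrpos] at hl
          calc β * L i = β * ∑ j, (U i j) ^ 2 := rfl
            _ ≤ p i * r := hl
        have hspos : (0 : ℝ) < s := by exact_mod_cast hs
        have e : p i * w i ^ 2 * L i = L i / ((s : ℝ) ^ 2 * p i) := by
          simp only [hw]
          field_simp
        rw [e, div_le_div_iff₀ (by positivity) (by positivity)]
        nlinarith [sq_nonneg (s : ℝ), mul_pos hspos hspos]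
  -- assemble
  have e2 : ∀ (a : Fin r) (b : Fin n),
      ∑ j : Fin s, ∑ j' : Fin s,
          ∑ ξ : Fin s → Fin N, (∏ t, p (ξ t)) * (h a b (ξ j) * h a b (ξ j')) =
        (s : ℝ) * ∑ i, p i * (h a b i * h a b i) := by
    intro a b
    have hterm : ∀ j j' : Fin s,
        ∑ ξ : Fin s → Fin N, (∏ t, p (ξ t)) * (h a b (ξ j) * h a b (ξ j')) =
          if j = j' then ∑ i, p i * (h a b i * h a b i) else 0 := by
      intro j j'
      rw [marg p hp1 (h a b) (h a b) j j']
      by_cases hjj : j = j' <;> simp [hjj, hmean a b]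
    rw [Finset.sum_congr rfl fun j _ => Finset.sum_congr rfl fun j' _ => hterm j j']
    simp [Finset.sum_ite_eq, Finset.sum_const, Finset.card_univ, mul_comm]
  have e3 : ∀ i, ∑ a : Fin r, ∑ b : Fin n, p i * (h a b i * h a b i) =
      (p i * w i ^ 2) * (L i * R i) := by
    intro i
    calc ∑ a : Fin r, ∑ b : Fin n, p i * (h a b i * h a b i)
        = ∑ a : Fin r, ∑ b : Fin n, (p i * w i ^ 2) * ((U i a) ^ 2 * (Bperp i b) ^ 2) := by
          refine Finset.sum_congr rfl fun a _ => Finset.sum_congr rfl fun b _ => ?_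
          simp only [hh]
          ring
      _ = (p i * w i ^ 2) * (L i * R i) := by
          simp only [hL, hR]
          rw [Finset.sum_mul_sum]
          simp only [Finset.mul_sum]
  calc ∑ ξ : Fin s → Fin N, (∏ j, p (ξ j)) *
        frobSq (Uᵀ * (randSampleMatrix s p ξ)ᵀ * (randSampleMatrix s p ξ * Bperp))
      = ∑ a : Fin r, ∑ b : Fin n, ∑ j : Fin s, ∑ j' : Fin s,
          ∑ ξ : Fin s → Fin N, (∏ t, p (ξ t)) * (h a b (ξ j) * h a b (ξ j')) := by
        rw [Finset.sum_congr rfl fun ξ _ => by rw [hf ξ]]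
        simp only [Finset.mul_sum]
        rw [Finset.sum_comm]
        refine Finset.sum_congr rfl fun a _ => ?_
        rw [Finset.sum_comm]
        refine Finset.sum_congr rfl fun b _ => ?_
        rw [Finset.sum_comm]
        refine Finset.sum_congr rfl fun j _ => ?_
        rw [Finset.sum_comm]
    _ = ∑ a : Fin r, ∑ b : Fin n, ((s : ℝ) * ∑ i, p i * (h a b i * h a b i)) :=
        Finset.sum_congr rfl fun a _ => Finset.sum_congr rfl fun b _ => e2 a b
    _ = (s : ℝ) * ∑ i, (p i * w i ^ 2) * (L i * R i) := by
        simp only [← Finset.mul_sum]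
        congr 1
        calc ∑ a : Fin r, ∑ b : Fin n, ∑ i, p i * (h a b i * h a b i)
            = ∑ a : Fin r, ∑ i, ∑ b : Fin n, p i * (h a b i * h a b i) :=
              Finset.sum_congr rfl fun a _ => Finset.sum_comm
          _ = ∑ i, ∑ a : Fin r, ∑ b : Fin n, p i * (h a b i * h a b i) := Finset.sum_comm
          _ = ∑ i, (p i * w i ^ 2) * (L i * R i) := Finset.sum_congr rfl fun i _ => e3 i
    _ ≤ (s : ℝ) * ∑ i, ((r : ℝ) / (β * (s : ℝ) ^ 2)) * R i :=
        mul_le_mul_of_nonneg_left (Finset.sum_le_sum fun i _ => hkey i) (Nat.cast_nonneg s)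
    _ = ((r : ℝ) / (β * (s : ℝ))) * Rsq := by
        rw [← Finset.mul_sum, hRsq]
        have hRsum : ∑ i, R i = frobSq Bperp := by simp [hR, frobSq]
        rw [hRsum]
        have hs' : (s : ℝ) ≠ 0 := Nat.cast_ne_zero.mpr hs.ne'
        field_simp
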